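/- arXiv:2303.03104 — 7 statements merged into one kernel-verified Lean document; each statement's English description precedes it below -/
import Mathlib

section
/- Work with arrays indexed by Fin 4 over ℝ, with Minkowski metric η = diag(-1,1,1,1) (its inverse is the same matrix); indices are raised and lowered by contracting with η. Let u : Fin 4 → ℝ satisfy Σ_{α,β} η_{αβ} u^α u^β = -1, and write u_β := Σ_γ η_{βγ} u^γ. Let S : Fin 4 → Fin 4 → Fin 4 → ℝ satisfy S^{αβγ} = -S^{βαγ}, and let Δ : Fin 4 → Fin 4 → ℝ satisfy Δ^{αβ} = -Δ^{βα} and Σ_β Δ^{αβ} u_β = 0 for all α. Define the trace T^β := Σ_{μ,ν} η_{μν} S^{βμν}. If the Einstein–Cartan field equation with Weyssenhoff source holds, i.e. S^{αβγ} + η^{γα} T^β - η^{γβ} T^α = Δ^{αβ} u^γ for all α,β,γ, then T^α = 0 for all α and consequently S^{αβγ} = Δ^{αβ} u^γ for all α,β,γ. -/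
open Finset

noncomputable section

/-- Minkowski metric `η = diag(-1,1,1,1)` on `Fin 4` (equal to its own inverse). -/
def η : Fin 4 → Fin 4 → ℝ := fun a b => if a = b then (if a = 0 then -1 else 1) else 0

/-- For a Weyssenhoff source, the Einstein–Cartan torsion field equation
`S^{αβγ} + η^{γα} T^β - η^{γβ} T^α = Δ^{αβ} u^γ` (with `T^β` the torsion trace) forces
`T = 0` and hence `S^{αβγ} = Δ^{αβ} u^γ`. -/
theorem weyssenhoff_torsion (u : Fin 4 → ℝ)
    (hu : ∑ a, ∑ b, η a b * u a * u b = -1)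
    (S : Fin 4 → Fin 4 → Fin 4 → ℝ)
    (hS : ∀ a b c, S a b c = - S b a c)
    (Δ : Fin 4 → Fin 4 → ℝ)
    (hΔanti : ∀ a b, Δ a b = - Δ b a)
    (hΔu : ∀ a, ∑ b, Δ a b * (∑ c, η b c * u c) = 0)
    (T : Fin 4 → ℝ)
    (hT : ∀ b, T b = ∑ μ, ∑ ν, η μ ν * S b μ ν)
    (hfield : ∀ a b c, S a b c + η c a * T b - η c b * T a = Δ a b * u c) :
    (∀ a, T a = 0) ∧ (∀ a b c, S a b c = Δ a b * u c) := by
  have hT0 : ∀ a, T a = 0 := by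
    intro a
    have h0 := hfield a 0 0
    have h1 := hfield a 1 1
    have h2 := hfield a 2 2
    have h3 := hfield a 3 3
    have ht := hT a
    have hd := hΔu a
    fin_cases a <;>
      simp [η, Fin.sum_univ_four] at h0 h1 h2 h3 ht hd ⊢ <;>
      linarith
  refine ⟨hT0, fun a b c => ?_⟩
  have h := hfield a b c
  rw [hT0 a, hT0 b] at h
  linarith
end
end

section
/- Let V be a real vector space and let R : V⁴ → ℝ be a quadrilinear map satisfying R(x,y,z,w) = -R(y,x,z,w) and R(x,y,z,w) = -R(x,y,w,z) for all x,y,z,w (antisymmetry in the first pair and in the last pair). Define the quadrilinear map A by A(x,y,z,w) := (1/3)(R(x,y,z,w) + R(y,z,x,w) + R(z,x,y,w)), i.e. A_{αβγδ} = R_{[αβγ]δ}. Then for all x,y,z,w ∈ V: 2·R(z,w,x,y) = 2·R(x,y,z,w) + 3·A(x,z,y,w) + 3·A(w,x,y,z) + 3·A(z,w,x,y) + 3·A(y,w,z,x). -/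
/-- For a quadrilinear map `R` antisymmetric in its first pair and in its
last pair of arguments, with `A(x,y,z,w) = (1/3)(R(x,y,z,w) + R(y,z,x,w) + R(z,x,y,w))`
(the antisymmetrization `R_{[αβγ]δ}`), the pair-exchange identity
`2 R(z,w,x,y) = 2 R(x,y,z,w) + 3 A(x,z,y,w) + 3 A(w,x,y,z) + 3 A(z,w,x,y) + 3 A(y,w,z,x)`
holds. -/
theorem riemann_pair_exchange {V : Type*} [AddCommGroup V] [Module ℝ V]
    (R : V →ₗ[ℝ] V →ₗ[ℝ] V →ₗ[ℝ] V →ₗ[ℝ] ℝ)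
    (h1 : ∀ x y z w : V, R x y z w = - R y x z w)
    (h2 : ∀ x y z w : V, R x y z w = - R x y w z)
    (A : V → V → V → V → ℝ)
    (hA : ∀ x y z w : V, A x y z w = (1/3) * (R x y z w + R y z x w + R z x y w)) :
    ∀ x y z w : V, 2 * R z w x y =
      2 * R x y z w + 3 * A x z y w + 3 * A w x y z + 3 * A z w x y + 3 * A y w z x := by
  intro x y z w
  simp only [hA]
  linarith [h1 x y z w, h2 x y z w, h1 z w x y, h2 z w x y, h1 x z y w, h2 x z y w, h1 z y x w, h2 z y x w, h1 y x z w, h2 y x z w, h1 w x y z, h2 w x y z, h1 x y w z, h2 x y w z, h1 y w x z, h2 y w x z, h1 w x z y, h2 w x z y, h1 x z w y, h2 x z w y, h1 y w z x, h2 y w z x, h1 w z y x, h2 w z y x, h1 z y w x, h2 z y w x, h2 y x z w, h2 w z x y, h2 z x y w, h2 y z x w, h2 x w y z, h2 y x w z, h2 w y x z, h2 x w z y, h2 z x w y, h2 w y z x, h2 z w y x, h2 y z w x]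
end

section
/- Work with arrays indexed by Fin 4 over ℝ, with Minkowski metric η = diag(-1,1,1,1); indices are raised and lowered with η. Let R : Fin 4⁴ → ℝ satisfy R_{αβγδ} = -R_{βαγδ} and R_{αβγδ} = -R_{αβδγ}. Define the Ricci tensor Ric_{αβ} := Σ_{μ,ν} R_{αμβν} η^{μν}, the Ricci scalar Rs := Σ_{α,β} η^{αβ} Ric_{αβ}, and the Weyl tensor C_{αβγδ} := R_{αβγδ} - ½(Ric_{αγ} η_{δβ} - Ric_{αδ} η_{γβ}) + ½(Ric_{βγ} η_{δα} - Ric_{βδ} η_{γα}) + (Rs/6)(η_{αγ} η_{δβ} - η_{αδ} η_{γβ}). Then the antisymmetrization of C over its first three indices satisfies C_{[αβγ]δ} = R_{[αβγ]δ} + R_{[αβ} η_{γ]δ}, where X_{[αβγ]δ} := (1/6) Σ_{σ ∈ S₃} sgn(σ) X_{σ(α)σ(β)σ(γ)δ} and R_{[αβ} η_{γ]δ} := (1/6) Σ_{σ ∈ S₃} sgn(σ) Ric_{σ(α)σ(β)} η_{σ(γ)δ} (antisymmetrization over α,β,γ in both cases). -/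
open Finset

noncomputable section

/-- Antisymmetrization of a 3-index array over its three indices with weight `1/3!`:
`X_{[abc]} = (1/6) Σ_{σ ∈ S₃} sgn(σ) X_{σ(a)σ(b)σ(c)}`. -/
def antisym3 (X : Fin 4 → Fin 4 → Fin 4 → ℝ) (a b c : Fin 4) : ℝ :=
  (1/6) * ∑ σ : Equiv.Perm (Fin 3),
    ((Equiv.Perm.sign σ : ℤ) : ℝ) *
      X (![a, b, c] (σ 0)) (![a, b, c] (σ 1)) (![a, b, c] (σ 2))


lemma antisym3_expand (X : Fin 4 → Fin 4 → Fin 4 → ℝ) (a b c : Fin 4) :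
    antisym3 X a b c = (1/6) * (X a b c - X b a c - X c b a - X a c b + X b c a + X c a b) := by
  have huniv : (Finset.univ : Finset (Equiv.Perm (Fin 3))) =
      {1, Equiv.swap 0 1, Equiv.swap 0 2, Equiv.swap 1 2,
       Equiv.swap 0 1 * Equiv.swap 1 2, Equiv.swap 1 2 * Equiv.swap 0 1} := by decide
  rw [antisym3, huniv]
  rw [Finset.sum_insert (by decide), Finset.sum_insert (by decide),
      Finset.sum_insert (by decide), Finset.sum_insert (by decide),
      Finset.sum_insert (by decide), Finset.sum_singleton]
  norm_num [Equiv.swap_apply_def, Equiv.Perm.sign_swap, Equiv.Perm.mul_apply,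
    show ((0:Fin 3)) ≠ 1 by decide, show ((0:Fin 3)) ≠ 2 by decide,
    show ((1:Fin 3)) ≠ 2 by decide, show ((2:Fin 3)) ≠ 0 by decide,
    show ((2:Fin 3)) ≠ 1 by decide]
  simp only [show (![a, b, c] : Fin 3 → Fin 4) 2 = c from rfl]
  ring

lemma η_symm (a b : Fin 4) : η a b = η b a := by
  unfold η; rcases eq_or_ne a b with h | h
  · subst h; rfl
  · rw [if_neg h, if_neg (Ne.symm h)]

/-- For the 4-dimensional Weyl tensor
`C_{αβγδ} = R_{αβγδ} - ½(Ric_{αγ} η_{δβ} - Ric_{αδ} η_{γβ}) + ½(Ric_{βγ} η_{δα} - Ric_{βδ} η_{γα})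
  + (Rs/6)(η_{αγ} η_{δβ} - η_{αδ} η_{γβ})`
built from a Riemann-like tensor (antisymmetric in each index pair), one has
`C_{[αβγ]δ} = R_{[αβγ]δ} + R_{[αβ} η_{γ]δ}`. -/
theorem weyl_first_three_antisymmetrization
    (R : Fin 4 → Fin 4 → Fin 4 → Fin 4 → ℝ)
    (h1 : ∀ a b c d, R a b c d = - R b a c d)
    (h2 : ∀ a b c d, R a b c d = - R a b d c)
    (Ric : Fin 4 → Fin 4 → ℝ)
    (hRic : ∀ a b, Ric a b = ∑ m, ∑ n, R a m b n * η m n)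
    (Rs : ℝ)
    (hRs : Rs = ∑ a, ∑ b, η a b * Ric a b)
    (C : Fin 4 → Fin 4 → Fin 4 → Fin 4 → ℝ)
    (hC : ∀ a b c d, C a b c d = R a b c d
      - (1/2) * (Ric a c * η d b - Ric a d * η c b)
      + (1/2) * (Ric b c * η d a - Ric b d * η c a)
      + (Rs/6) * (η a c * η d b - η a d * η c b)) :
    ∀ a b c d, antisym3 (fun x y z => C x y z d) a b c =
      antisym3 (fun x y z => R x y z d) a b c
      + antisym3 (fun x y z => Ric x y * η z d) a b c := by
  intro a b c d
  simp only [antisym3_expand, hC]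
  simp only [η_symm b a, η_symm c a, η_symm c b, η_symm d a, η_symm d b, η_symm d c]
  ring
end
end

section
/- Let Λ ∈ ℝ and let ℓ, μ, p, s : ℝ → ℝ be functions with ℓ twice differentiable and everywhere positive, and μ, s differentiable. Define θ := 3 ℓ'/ℓ and suppose for all τ ∈ ℝ: (Raychaudhuri) θ'(τ) = -4π(μ(τ) + 3 p(τ)) + Λ - (1/3) θ(τ)² + 2 s(τ); (torsion conservation) s'(τ) = -2 θ(τ) s(τ); (energy conservation) μ'(τ) = -θ(τ)(μ(τ) + p(τ)). Define the spatial Ricci scalar R3 := 2(-(1/3) θ² - s + 8π μ + Λ). Then the function τ ↦ R3(τ) · ℓ(τ)² has zero derivative everywhere; in particular there exists a constant K ∈ ℝ such that R3(τ) = 6K/ℓ(τ)² for all τ. -/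
open Real

/-- In the Einstein-Cartan cosmology, from the Raychaudhuri equation,
the torsion conservation `s' = -2θs`, and energy conservation, the quantity
`³R ℓ²` (with `³R = 2(-θ²/3 - s + 8πμ + Λ)`) has zero derivative; hence
`³R = 6K/ℓ²` for a constant `K`. -/
theorem spatial_curvature_constant (Λ : ℝ) (ℓ μ p s : ℝ → ℝ)
    (hℓd : Differentiable ℝ ℓ) (hℓd2 : Differentiable ℝ (deriv ℓ))
    (hℓpos : ∀ τ, 0 < ℓ τ)
    (hμd : Differentiable ℝ μ) (hsd : Differentiable ℝ s)
    (θ : ℝ → ℝ) (hθ : ∀ τ, θ τ = 3 * deriv ℓ τ / ℓ τ)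
    (hRay : ∀ τ, deriv θ τ =
      -4 * π * (μ τ + 3 * p τ) + Λ - (1/3) * θ τ ^ 2 + 2 * s τ)
    (hTor : ∀ τ, deriv s τ = -2 * θ τ * s τ)
    (hEn : ∀ τ, deriv μ τ = -(θ τ) * (μ τ + p τ))
    (R3 : ℝ → ℝ)
    (hR3 : ∀ τ, R3 τ = 2 * (-(1/3) * θ τ ^ 2 - s τ + 8 * π * μ τ + Λ)) :
    (∀ τ, deriv (fun τ' => R3 τ' * ℓ τ' ^ 2) τ = 0) ∧
      ∃ K : ℝ, ∀ τ, R3 τ = 6 * K / ℓ τ ^ 2 := by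
  have hℓne : ∀ τ, ℓ τ ≠ 0 := fun τ => (hℓpos τ).ne'
  have hθeq : θ = fun τ => 3 * deriv ℓ τ / ℓ τ := funext hθ
  have hθdiff : Differentiable ℝ θ := by
    rw [hθeq]; exact (hℓd2.const_mul 3).div hℓd hℓne
  have hR3eq : R3 = fun τ => 2 * (-(1/3) * θ τ ^ 2 - s τ + 8 * π * μ τ + Λ) :=
    funext hR3
  -- derivative of f := R3 * ℓ² at each τ
  have key : ∀ τ, HasDerivAt (fun τ' => R3 τ' * ℓ τ' ^ 2) 0 τ := by
    intro τ
    have hθ' : HasDerivAt θ (-4 * π * (μ τ + 3 * p τ) + Λ - (1/3) * θ τ ^ 2 + 2 * s τ) τ :=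
      hRay τ ▸ (hθdiff τ).hasDerivAt
    have hs' : HasDerivAt s (-2 * θ τ * s τ) τ := hTor τ ▸ (hsd τ).hasDerivAt
    have hμ' : HasDerivAt μ (-(θ τ) * (μ τ + p τ)) τ := hEn τ ▸ (hμd τ).hasDerivAt
    have hℓ' : HasDerivAt ℓ (deriv ℓ τ) τ := (hℓd τ).hasDerivAt
    have hℓval : deriv ℓ τ = θ τ * ℓ τ / 3 := by
      have h := hθ τ
      field_simp [hℓne τ] at h ⊢
      linarith
    have hR3' : HasDerivAt R3
        (2 * (-(1/3) * (2 * θ τ * (-4 * π * (μ τ + 3 * p τ) + Λ - (1/3) * θ τ ^ 2 + 2 * s τ))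
          - (-2 * θ τ * s τ) + 8 * π * (-(θ τ) * (μ τ + p τ)))) τ := by
      rw [hR3eq]
      have h1 : HasDerivAt (fun t => θ t ^ 2)
          (2 * θ τ * (-4 * π * (μ τ + 3 * p τ) + Λ - (1/3) * θ τ ^ 2 + 2 * s τ)) τ := by
        have := hθ'.pow 2
        exact this.congr_deriv (by ring)
      have h2 := ((((h1.const_mul (-(1/3 : ℝ))).sub hs').add
        (hμ'.const_mul (8 * π))).add_const Λ).const_mul 2
      exact h2
    have hsq : HasDerivAt (fun t => ℓ t ^ 2) (2 * ℓ τ * deriv ℓ τ) τ := by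
      have := hℓ'.pow 2
      exact this.congr_deriv (by ring)
    have := hR3'.mul hsq
    refine this.congr_deriv ?_
    rw [hR3 τ, hℓval]
    ring
  have hderiv0 : ∀ τ, deriv (fun τ' => R3 τ' * ℓ τ' ^ 2) τ = 0 :=
    fun τ => (key τ).deriv
  refine ⟨hderiv0, ⟨R3 0 * ℓ 0 ^ 2 / 6, fun τ => ?_⟩⟩
  have hdf : Differentiable ℝ (fun τ' => R3 τ' * ℓ τ' ^ 2) :=
    fun τ => (key τ).differentiableAt
  have hconst := is_const_of_deriv_eq_zero hdf hderiv0 τ 0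
  have hne := hℓne τ
  field_simp
  linarith [hconst]
end

section
/- Let ℓ, s : ℝ → ℝ be differentiable functions with ℓ(τ) > 0 for all τ, and suppose s satisfies the torsion conservation law s'(τ) = -6 (ℓ'(τ)/ℓ(τ)) s(τ) for all τ (equivalently s' = -2θ s with θ = 3ℓ'/ℓ). Let the spatial curvature be that of the open case, R3(τ) := -6/ℓ(τ)², and define h(τ) := -(R3(τ)/3) · s(τ) = 2 s(τ)/ℓ(τ)². Then τ ↦ h(τ) · ℓ(τ)⁸ is constant; i.e. for all τ, τ₀ ∈ ℝ, h(τ) = h(τ₀) · (ℓ(τ₀)/ℓ(τ))⁸. In particular the squared magnetic Weyl tensor scales as 1/ℓ⁸. -/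
/-- In the open (`³R = -6/ℓ²`) Einstein-Cartan cosmology, with the torsion
conservation law `s' = -6 (ℓ'/ℓ) s`, the squared magnetic Weyl tensor
`h = -(³R/3)·s = 2s/ℓ²` satisfies `h·ℓ⁸ = const`, i.e. `h(τ) = h(τ₀) (ℓ(τ₀)/ℓ(τ))⁸`:
it scales as `1/ℓ⁸`. -/
theorem magnetic_weyl_scaling (ℓ s : ℝ → ℝ)
    (hℓd : Differentiable ℝ ℓ) (hsd : Differentiable ℝ s)
    (hℓpos : ∀ τ, 0 < ℓ τ)
    (hTor : ∀ τ, deriv s τ = -6 * (deriv ℓ τ / ℓ τ) * s τ)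
    (R3 : ℝ → ℝ) (hR3 : ∀ τ, R3 τ = -6 / ℓ τ ^ 2)
    (h : ℝ → ℝ) (hh : ∀ τ, h τ = -(R3 τ / 3) * s τ) :
    (∀ τ₁ τ₂, h τ₁ * ℓ τ₁ ^ 8 = h τ₂ * ℓ τ₂ ^ 8) ∧
      ∀ τ τ₀, h τ = h τ₀ * (ℓ τ₀ / ℓ τ) ^ 8 := by
  have hF : ∀ τ₁ τ₂, s τ₁ * ℓ τ₁ ^ 6 = s τ₂ * ℓ τ₂ ^ 6 := by
    have hd : ∀ τ, deriv (fun t => s t * ℓ t ^ 6) τ = 0 := by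
      intro τ
      have h1 : HasDerivAt s (deriv s τ) τ := (hsd τ).hasDerivAt
      have h2 : HasDerivAt ℓ (deriv ℓ τ) τ := (hℓd τ).hasDerivAt
      have h3 := h1.fun_mul ((h2.fun_pow 6))
      have := h3.deriv
      rw [this, hTor τ]
      have hℓne : ℓ τ ≠ 0 := (hℓpos τ).ne'
      field_simp
      ring
    intro τ₁ τ₂
    have := is_const_of_deriv_eq_zero
      (f := fun t => s t * ℓ t ^ 6)
      (hsd.mul (hℓd.pow 6)) hd τ₁ τ₂
    exact this
  have key : ∀ τ, h τ * ℓ τ ^ 8 = 2 * (s τ * ℓ τ ^ 6) := by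
    intro τ
    have hℓne : ℓ τ ≠ 0 := (hℓpos τ).ne'
    rw [hh τ, hR3 τ]
    field_simp
    ring
  constructor
  · intro τ₁ τ₂
    rw [key, key, hF τ₁ τ₂]
  · intro τ τ₀
    have hℓne : ℓ τ ≠ 0 := (hℓpos τ).ne'
    have hℓne₀ : ℓ τ₀ ≠ 0 := (hℓpos τ₀).ne'
    have e := key τ
    rw [hF τ τ₀, ← key τ₀] at e
    field_simp at e ⊢
    linarith [e]
end

section
/- Let ℓ : ℝ → ℝ be twice differentiable with ℓ(τ) > 0 for all τ; let t : ℝ → ℝ satisfy t'(τ) = 1/ℓ(τ) for all τ (conformal time); let f : ℝ → ℝ be twice differentiable, and let k ∈ ℝ. Define θ := 3 ℓ'/ℓ, H := ℓ'/ℓ, and h(τ) := f(t(τ))/ℓ(τ)⁴. Then for all τ ∈ ℝ: h''(τ) + h(τ)·[k²/ℓ(τ)² + (4/3)(θ'(τ) - (4/3)θ(τ)²)] = (1/ℓ(τ)⁶)·[f''(t(τ)) - 9 ℓ(τ) H(τ) f'(t(τ)) + k² f(t(τ))]. In particular, h solves the mode equation ḧ + h[k²/ℓ² + (4/3)(θ̇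 - (4/3)θ²)] = 0 if and only if f''(t(τ)) - 9 ℓ(τ) H(τ) f'(t(τ)) + k² f(t(τ)) = 0 for all τ. -/
/-- change of variables for the gravitational-wave mode equation.
With `θ = 3ℓ'/ℓ`, `H = ℓ'/ℓ`, conformal time `t' = 1/ℓ`, and `h(τ) = f(t(τ))/ℓ(τ)⁴`:
`h'' + h[k²/ℓ² + (4/3)(θ' - (4/3)θ²)] = (1/ℓ⁶)[f''(t) - 9ℓH f'(t) + k² f(t)]`,
hence `h` solves the mode equation iff `f'' - 9ℓH f' + k² f = 0` along `t`. -/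
theorem mode_equation_conformal_time (ℓ t f : ℝ → ℝ) (k : ℝ)
    (hℓd : Differentiable ℝ ℓ) (hℓd2 : Differentiable ℝ (deriv ℓ))
    (hℓpos : ∀ τ, 0 < ℓ τ)
    (ht : ∀ τ, HasDerivAt t (1 / ℓ τ) τ)
    (hfd : Differentiable ℝ f) (hfd2 : Differentiable ℝ (deriv f))
    (θ Hb h : ℝ → ℝ)
    (hθ : ∀ τ, θ τ = 3 * deriv ℓ τ / ℓ τ)
    (hHb : ∀ τ, Hb τ = deriv ℓ τ / ℓ τ)
    (hh : ∀ τ, h τ = f (t τ) / ℓ τ ^ 4) :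
    (∀ τ, deriv (deriv h) τ
        + h τ * (k ^ 2 / ℓ τ ^ 2 + (4/3) * (deriv θ τ - (4/3) * θ τ ^ 2)) =
      (1 / ℓ τ ^ 6) *
        (deriv (deriv f) (t τ) - 9 * ℓ τ * Hb τ * deriv f (t τ) + k ^ 2 * f (t τ))) ∧
    ((∀ τ, deriv (deriv h) τ
        + h τ * (k ^ 2 / ℓ τ ^ 2 + (4/3) * (deriv θ τ - (4/3) * θ τ ^ 2)) = 0) ↔
      ∀ τ, deriv (deriv f) (t τ) - 9 * ℓ τ * Hb τ * deriv f (t τ) + k ^ 2 * f (t τ) = 0) := by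
  have hne : ∀ τ, ℓ τ ≠ 0 := fun τ => (hℓpos τ).ne'
  have hℓ' : ∀ τ, HasDerivAt ℓ (deriv ℓ τ) τ := fun τ => (hℓd τ).hasDerivAt
  have hℓ'' : ∀ τ, HasDerivAt (deriv ℓ) (deriv (deriv ℓ) τ) τ := fun τ => (hℓd2 τ).hasDerivAt
  have hft : ∀ τ, HasDerivAt (fun τ => f (t τ)) (deriv f (t τ) * (1 / ℓ τ)) τ :=
    fun τ => (hfd (t τ)).hasDerivAt.comp τ (ht τ)
  have hf't : ∀ τ, HasDerivAt (fun τ => deriv f (t τ)) (deriv (deriv f) (t τ) * (1 / ℓ τ)) τ :=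
    fun τ => (hfd2 (t τ)).hasDerivAt.comp τ (ht τ)
  -- first derivative of h
  have hfun : h = fun τ => f (t τ) / ℓ τ ^ 4 := funext hh
  have hh1 : ∀ τ, HasDerivAt h ((deriv f (t τ) - 4 * f (t τ) * deriv ℓ τ) / ℓ τ ^ 5) τ := by
    intro τ
    rw [hfun]
    have hd := (hft τ).fun_div ((hℓ' τ).fun_pow 4) (pow_ne_zero 4 (hne τ))
    refine hd.congr_deriv ?_
    have := hne τ
    field_simp
    ring
  have hdh : deriv h = fun τ => (deriv f (t τ) - 4 * f (t τ) * deriv ℓ τ) / ℓ τ ^ 5 :=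
    funext fun τ => (hh1 τ).deriv
  -- second derivative of h
  have hh2 : ∀ τ, deriv (deriv h) τ =
      (deriv (deriv f) (t τ) - 9 * deriv f (t τ) * deriv ℓ τ
        - 4 * f (t τ) * deriv (deriv ℓ) τ * ℓ τ + 20 * f (t τ) * deriv ℓ τ ^ 2) / ℓ τ ^ 6 := by
    intro τ
    rw [hdh]
    have hnum : HasDerivAt (fun τ => deriv f (t τ) - 4 * f (t τ) * deriv ℓ τ)
        (deriv (deriv f) (t τ) * (1 / ℓ τ)
          - 4 * (deriv f (t τ) * (1 / ℓ τ) * deriv ℓ τ + f (t τ) * deriv (deriv ℓ) τ)) τ := by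
      simpa [mul_assoc] using (hf't τ).fun_sub (((hft τ).fun_mul (hℓ'' τ)).const_mul 4)
    have hd := hnum.fun_div ((hℓ' τ).fun_pow 5) (pow_ne_zero 5 (hne τ))
    rw [hd.deriv]
    have := hne τ
    field_simp
    ring
  -- derivative of θ
  have hθfun : θ = fun τ => 3 * deriv ℓ τ / ℓ τ := funext hθ
  have hθd : ∀ τ, deriv θ τ =
      (3 * deriv (deriv ℓ) τ * ℓ τ - 3 * deriv ℓ τ * deriv ℓ τ) / ℓ τ ^ 2 := by
    intro τ
    rw [hθfun]
    have hd := ((hℓ'' τ).const_mul 3).fun_div (hℓ' τ) (hne τ)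
    rw [hd.deriv]
  -- main identity
  have main : ∀ τ, deriv (deriv h) τ
      + h τ * (k ^ 2 / ℓ τ ^ 2 + (4/3) * (deriv θ τ - (4/3) * θ τ ^ 2)) =
      (1 / ℓ τ ^ 6) *
        (deriv (deriv f) (t τ) - 9 * ℓ τ * Hb τ * deriv f (t τ) + k ^ 2 * f (t τ)) := by
    intro τ
    rw [hh2 τ, hh τ, hθd τ, hθ τ, hHb τ]
    have := hne τ
    field_simp
    ring
  refine ⟨main, ?_⟩
  constructor
  · intro H0 τ
    have := (main τ).symm.trans (H0 τ)
    have h6 : (1 : ℝ) / ℓ τ ^ 6 ≠ 0 := by have := hℓpos τ; positivity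
    exact (mul_eq_zero.mp this).resolve_left h6
  · intro H0 τ
    rw [main τ, H0 τ, mul_zero]
end

section
/- Let Λ ∈ ℝ and let θ, μ, p, s, N : ℝ → ℝ with θ and N differentiable. Suppose for all τ: (i) N'(τ) = (2/3) θ(τ) N(τ); (ii) θ'(τ) = -4π(μ(τ) + 3p(τ)) + Λ - θ(τ)²/3 + 2 s(τ); and define R3(τ) := 2(-θ(τ)²/3 - s(τ) + 8π μ(τ) + Λ). Then N is twice differentiable and for all τ: N''(τ) = (1/3)·(8π(μ(τ) - 3 p(τ)) + 4Λ + 2 s(τ) - R3(τ)) · N(τ). -/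
open Real

/-- tidal relation for the squared norm `N = n_δ n^δ` of the separation
vector: from `N' = (2/3)θN`, the Raychaudhuri equation, and
`³R = 2(-θ²/3 - s + 8πμ + Λ)`, one gets
`N'' = (1/3)(8π(μ - 3p) + 4Λ + 2s - ³R) N`. -/
theorem tidal_acceleration (Λ : ℝ) (θ μ p s N : ℝ → ℝ)
    (hθd : Differentiable ℝ θ) (hNd : Differentiable ℝ N)
    (hN' : ∀ τ, deriv N τ = (2/3) * θ τ * N τ)
    (hRay : ∀ τ, deriv θ τ = -4 * π * (μ τ + 3 * p τ) + Λ - θ τ ^ 2 / 3 + 2 * s τ)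
    (R3 : ℝ → ℝ)
    (hR3 : ∀ τ, R3 τ = 2 * (-θ τ ^ 2 / 3 - s τ + 8 * π * μ τ + Λ)) :
    Differentiable ℝ (deriv N) ∧
      ∀ τ, deriv (deriv N) τ =
        (1/3) * (8 * π * (μ τ - 3 * p τ) + 4 * Λ + 2 * s τ - R3 τ) * N τ := by
  have heq : deriv N = fun τ => (2/3) * θ τ * N τ := funext hN'
  have hd : Differentiable ℝ (fun τ => (2/3) * θ τ * N τ) :=
    (differentiable_const _ |>.mul hθd).mul hNd
  refine ⟨heq ▸ hd, fun τ => ?_⟩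
  rw [heq]
  have : deriv (fun τ => (2/3) * θ τ * N τ) τ
      = (2/3) * deriv θ τ * N τ + (2/3) * θ τ * deriv N τ := by
    rw [deriv_fun_mul (show DifferentiableAt ℝ (fun τ => (2/3 : ℝ) * θ τ) τ from (differentiable_const _ |>.mul hθd) τ) (hNd τ),
      deriv_const_mul _ (hθd τ)]
  rw [this, hRay, hN', hR3]
  ring
end
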